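/- Let V be a real inner product space, L : V → V a linear map that is symmetric (⟨Lx, y⟩ = ⟨x, Ly⟩ for all x, y ∈ V), and D : V → V a linear map that is skew-symmetric (⟨Dx, y⟩ = −⟨x, Dy⟩ for all x, y ∈ V). Let g₁, …, g_N ∈ V satisfy L(D(L gₙ)) = 0 for each n = 1, …, N. If there exist v ∈ V and a = (a₁, …, a_N) ∈ ℝᴺ with D(L v) = Σₙ aₙ gₙ, then the N×N matrix H with entries H_{n,m} = ⟨L gₙ, gₘ⟩ satisfies H·a = 0; in particular, if a ≠ 0 then H is singular. (This is the abstract content of Lemma 3: the second generalized kernel of ∂ₓL_N is empty if the Hessian matrix H has no zero eigenvalue.) -/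
import Mathlib


open scoped InnerProductSpace

/-- Abstract content of Lemma 3: if `L` is symmetric, `D` skew-symmetric,
`g₁, …, g_N` satisfy `L (D (L gₙ)) = 0`, and `D (L v) = Σₙ aₙ gₙ` for some `v`,
then the Hessian-type matrix `H_{n,m} = ⟪L gₙ, gₘ⟫` satisfies `H a = 0`;
in particular `H` is singular whenever `a ≠ 0`. -/
theorem second_generalized_kernel_empty_of_nonsingular_hessian
    {V : Type*} [NormedAddCommGroup V] [InnerProductSpace ℝ V]
    (L D : V →ₗ[ℝ] V)
    (hL : ∀ x y : V, ⟪L x, y⟫_ℝ = ⟪x, L y⟫_ℝ)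
    (hD : ∀ x y : V, ⟪D x, y⟫_ℝ = -⟪x, D y⟫_ℝ)
    (N : ℕ) (g : Fin N → V)
    (hg : ∀ n, L (D (L (g n))) = 0)
    (v : V) (a : Fin N → ℝ)
    (hv : D (L v) = ∑ n, a n • g n)
    (H : Matrix (Fin N) (Fin N) ℝ)
    (hH : H = fun n m => ⟪L (g n), g m⟫_ℝ) :
    H.mulVec a = 0 ∧ (a ≠ 0 → H.det = 0) := by
  have hmul : H.mulVec a = 0 := by
    funext n
    have key : ⟪L (g n), D (L v)⟫_ℝ = 0 := by
      have h1 := hD (L (g n)) (L v)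
      have h2 := hL (D (L (g n))) v
      rw [hg n, inner_zero_left] at h2
      rw [← h2] at h1
      linarith
    rw [hv, inner_sum] at key
    simp only [real_inner_smul_right] at key
    simp only [Matrix.mulVec, dotProduct, hH, Pi.zero_apply]
    rw [← key]
    exact Finset.sum_congr rfl fun m _ => mul_comm _ _
  refine ⟨hmul, fun ha => ?_⟩
  by_contra hdet
  exact ha (Matrix.eq_zero_of_mulVec_eq_zero hdet hmul)
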